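/- arXiv:2312.16701 — 2 statements merged into one kernel-verified Lean document; each statement's English description precedes it below -/
import Mathlib

section
/- Let m ≠ 0 and E ∈ ℝ with 0 < |E| < |m|, and set ω := √(m² − E²). Define the 2×2 complex matrices a₁(ξ) := I + (m/√(ξ²+ω²))σ₃ for ξ ∈ ℝ, and a₂(ξ) := I − (2im²/(ξ²−E²))M for ξ ∈ ℝ with ξ ≠ ±E. Then the product a(ξ) := a₁(ξ)a₂(ξ), initially defined for ξ ≠ ±E, extends to a continuous matrix-valued function on all of ℝ; for every ξ ∈ ℝ the matrix a(ξ) is invertible with inverse a(ξ)⁻¹ = (I−M)·√(ξ²+ω²)/(√(ξ²+ω²)+|m|) + M·(1 + |m|/√(ξ²+ω²))·(1 + (2i+1)m²/(ξ²−E²−2im²)); and there exist constants 0 < c ≤ C (depending only on m and E) such that every eigenvalue μ of a(ξ) satisfies c ≤ |μ| ≤ C for all ξ ∈ ℝ. -/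
noncomputable section

/-- Pauli matrix `σ₃`. -/
def sigma3 : Matrix (Fin 2) (Fin 2) ℂ := !![1, 0; 0, -1]

/-- `M = diag(1,0)` if `m < 0`, `diag(0,1)` if `m > 0`. -/
def Mmat (m : ℝ) : Matrix (Fin 2) (Fin 2) ℂ :=
  if m < 0 then !![1, 0; 0, 0] else !![0, 0; 0, 1]

/-- The symbol `a₁(ξ) = I + (m/√(ξ²+ω²))σ₃`, with `ω² = m² − E²`. -/
def a1 (m E ξ : ℝ) : Matrix (Fin 2) (Fin 2) ℂ :=
  1 + (((m : ℂ)) / ((Real.sqrt (ξ ^ 2 + (m ^ 2 - E ^ 2)) : ℝ) : ℂ)) • sigma3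

/-- The symbol `a₂(ξ) = I − (2im²/(ξ²−E²))M`. -/
def a2 (m E ξ : ℝ) : Matrix (Fin 2) (Fin 2) ℂ :=
  1 - (2 * Complex.I * (m : ℂ) ^ 2 / ((ξ : ℂ) ^ 2 - (E : ℂ) ^ 2)) • Mmat m

/-- The claimed inverse of `a(ξ) = a₁(ξ)a₂(ξ)`. -/
def aInv (m E ξ : ℝ) : Matrix (Fin 2) (Fin 2) ℂ :=
  (((Real.sqrt (ξ ^ 2 + (m ^ 2 - E ^ 2)) : ℝ) : ℂ)
      / (((Real.sqrt (ξ ^ 2 + (m ^ 2 - E ^ 2)) : ℝ) : ℂ) + ((|m| : ℝ) : ℂ)))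
    • (1 - Mmat m)
  + ((1 + ((|m| : ℝ) : ℂ) / ((Real.sqrt (ξ ^ 2 + (m ^ 2 - E ^ 2)) : ℝ) : ℂ))
      * (1 + (2 * Complex.I + 1) * (m : ℂ) ^ 2
          / ((ξ : ℂ) ^ 2 - (E : ℂ) ^ 2 - 2 * Complex.I * (m : ℂ) ^ 2)))
    • Mmat m

/-! ### Auxiliary definitions -/

def sfun (m E ξ : ℝ) : ℝ := Real.sqrt (ξ ^ 2 + (m ^ 2 - E ^ 2))

def d1 (m E ξ : ℝ) : ℂ := 1 + ((|m| : ℝ) : ℂ) / ((sfun m E ξ : ℝ) : ℂ)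

def d2 (m E ξ : ℝ) : ℂ :=
  ((ξ : ℂ) ^ 2 - (E : ℂ) ^ 2 - 2 * Complex.I * (m : ℂ) ^ 2)
    / (((sfun m E ξ : ℝ) : ℂ) * (((sfun m E ξ : ℝ) : ℂ) + ((|m| : ℝ) : ℂ)))

def Amat (m E ξ : ℝ) : Matrix (Fin 2) (Fin 2) ℂ :=
  if m < 0 then !![d2 m E ξ, 0; 0, d1 m E ξ] else !![d1 m E ξ, 0; 0, d2 m E ξ]

lemma hw (m E : ℝ) (hEm : |E| < |m|) : 0 < m ^ 2 - E ^ 2 := by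
  nlinarith [sq_abs m, sq_abs E, abs_nonneg E, hEm]

lemma hs_pos (m E ξ : ℝ) (hEm : |E| < |m|) : 0 < sfun m E ξ := by
  have := hw m E hEm
  exact Real.sqrt_pos.mpr (by nlinarith [sq_nonneg ξ])

lemma hs_sq (m E ξ : ℝ) (hEm : |E| < |m|) : (sfun m E ξ) ^ 2 = ξ ^ 2 + (m ^ 2 - E ^ 2) := by
  have := hw m E hEm
  exact Real.sq_sqrt (by nlinarith [sq_nonneg ξ])

lemma num_ne (m E ξ : ℝ) (hm : m ≠ 0) :
    ((ξ : ℂ) ^ 2 - (E : ℂ) ^ 2 - 2 * Complex.I * (m : ℂ) ^ 2) ≠ 0 := by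
  intro h
  have h2 := congrArg Complex.im h
  simp [← Complex.ofReal_pow, Complex.sub_im, Complex.mul_im, Complex.mul_re,
    Complex.ofReal_im, Complex.ofReal_re, Complex.I_re, Complex.I_im] at h2
  exact hm h2

/-! ### The product identity -/

lemma prod_eq (m E ξ : ℝ) (hm : m ≠ 0) (hEm : |E| < |m|) (h1 : ξ ≠ E) (h2 : ξ ≠ -E) :
    Amat m E ξ = a1 m E ξ * a2 m E ξ := by
  have hsp := hs_pos m E ξ hEm
  have hsq := hs_sq m E ξ hEm
  set s := sfun m E ξ with hsdef
  have hsqrt : Real.sqrt (ξ ^ 2 + (m ^ 2 - E ^ 2)) = s := rfl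
  have hsC : ((s : ℝ) : ℂ) ≠ 0 := by exact_mod_cast hsp.ne'
  have hxe : ((ξ:ℂ)^2 - (E:ℂ)^2) ≠ 0 := by
    have ha : (ξ:ℂ) - E ≠ 0 := sub_ne_zero.mpr (by exact_mod_cast h1)
    have hb : (ξ:ℂ) + E ≠ 0 := by
      intro h; apply h2
      have : ((ξ + E : ℝ) : ℂ) = 0 := by push_cast; linear_combination h
      have : ξ + E = 0 := by exact_mod_cast this
      linarith
    intro h; exact (mul_ne_zero ha hb) (by linear_combination h)
  have hsC2 : ((s : ℝ) : ℂ)^2 = (ξ:ℂ)^2 + ((m:ℂ)^2 - (E:ℂ)^2) := by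
    exact_mod_cast congrArg (Complex.ofReal) hsq
  have hkey : (ξ:ℂ)^2 - (E:ℂ)^2 = ((s : ℝ) : ℂ)^2 - (m:ℂ)^2 := by
    linear_combination -hsC2
  rw [hkey] at hxe
  rcases hm.lt_or_gt with hneg | hpos
  · have habs : |m| = -m := abs_of_neg hneg
    have hsm : ((s : ℝ) : ℂ) - (m : ℂ) ≠ 0 := by
      intro hc
      have h0 : ((s - m : ℝ) : ℂ) = 0 := by push_cast; linear_combination hc
      have : s - m = 0 := by exact_mod_cast h0
      linarith
    ext i j
    fin_cases i <;> fin_cases j <;>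
      simp [Amat, a1, a2, sigma3, Mmat, hneg, habs, Matrix.mul_apply, Fin.sum_univ_two,
        Matrix.one_apply, d1, d2, hsqrt]
    all_goals try rw [← hsdef]
    all_goals try rw [hkey]
    all_goals try simp only [← sub_eq_add_neg]
    all_goals field_simp
    all_goals ring
  · have habs : |m| = m := abs_of_pos hpos
    have hmlt : ¬ m < 0 := not_lt.mpr hpos.le
    have hsm : ((s : ℝ) : ℂ) + (m : ℂ) ≠ 0 := by
      intro hc
      have h0 : ((s + m : ℝ) : ℂ) = 0 := by push_cast; linear_combination hc
      have : s + m = 0 := by exact_mod_cast h0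
      linarith
    ext i j
    fin_cases i <;> fin_cases j <;>
      simp [Amat, a1, a2, sigma3, Mmat, hmlt, habs, Matrix.mul_apply, Fin.sum_univ_two,
        Matrix.one_apply, d1, d2, hsqrt]
    all_goals try rw [← hsdef]
    all_goals try rw [hkey]
    all_goals try simp only [← sub_eq_add_neg]
    all_goals field_simp
    all_goals ring

/-! ### The inverse identity -/

lemma inv_eq (m E ξ : ℝ) (hm : m ≠ 0) (hEm : |E| < |m|) :
    Amat m E ξ * aInv m E ξ = 1 ∧ aInv m E ξ * Amat m E ξ = 1 := by
  have hsp := hs_pos m E ξ hEm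
  have hsq := hs_sq m E ξ hEm
  set s := sfun m E ξ with hsdef
  have hsqrt : Real.sqrt (ξ ^ 2 + (m ^ 2 - E ^ 2)) = s := rfl
  have hsC : ((s : ℝ) : ℂ) ≠ 0 := by exact_mod_cast hsp.ne'
  have hamp : (0:ℝ) < s + |m| := by positivity
  have hsam : ((s : ℝ) : ℂ) + ((|m| : ℝ) : ℂ) ≠ 0 := by
    intro hc
    have h0 : ((s + |m| : ℝ) : ℂ) = 0 := by push_cast; linear_combination hc
    have : s + |m| = 0 := by exact_mod_cast h0
    linarith
  have hnum := num_ne m E ξ hm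
  have hsC2 : ((s : ℝ) : ℂ)^2 = (ξ:ℂ)^2 + ((m:ℂ)^2 - (E:ℂ)^2) := by
    exact_mod_cast congrArg (Complex.ofReal) hsq
  have hkey : (ξ:ℂ)^2 - (E:ℂ)^2 = ((s : ℝ) : ℂ)^2 - (m:ℂ)^2 := by
    linear_combination -hsC2
  rw [hkey] at hnum
  rcases lt_or_ge m 0 with hneg | hpos
  · have habs : |m| = -m := abs_of_neg hneg
    have hsm : ((s : ℝ) : ℂ) - (m : ℂ) ≠ 0 := by
      intro hc
      have h0 : ((s - m : ℝ) : ℂ) = 0 := by push_cast; linear_combination hc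
      have : s - m = 0 := by exact_mod_cast h0
      nlinarith
    constructor <;>
    · ext i j
      fin_cases i <;> fin_cases j <;>
        simp [Amat, aInv, Mmat, hneg, habs, Matrix.mul_apply, Fin.sum_univ_two,
          Matrix.one_apply, d1, d2, hsqrt]
      all_goals try rw [← hsdef]
      all_goals try rw [hkey]
      all_goals try simp only [← sub_eq_add_neg]
      all_goals field_simp [show ((s : ℝ) : ℂ) ^ 2 - (m : ℂ) ^ 2 - (m : ℂ) ^ 2 * 2 * Complex.I ≠ 0 from fun h => hnum (by linear_combination h)]
      all_goals ring
  · have habs : |m| = m := abs_of_pos (lt_of_le_of_ne hpos (Ne.symm hm))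
    have hmlt : ¬ m < 0 := not_lt.mpr hpos
    have hsm : ((s : ℝ) : ℂ) + (m : ℂ) ≠ 0 := by
      intro hc
      have h0 : ((s + m : ℝ) : ℂ) = 0 := by push_cast; linear_combination hc
      have : s + m = 0 := by exact_mod_cast h0
      nlinarith [abs_of_pos (lt_of_le_of_ne hpos (Ne.symm hm)), hsp]
    constructor <;>
    · ext i j
      fin_cases i <;> fin_cases j <;>
        simp [Amat, aInv, Mmat, hmlt, habs, Matrix.mul_apply, Fin.sum_univ_two,
          Matrix.one_apply, d1, d2, hsqrt]
      all_goals try rw [← hsdef]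
      all_goals try rw [hkey]
      all_goals try simp only [← sub_eq_add_neg]
      all_goals field_simp [show ((s : ℝ) : ℂ) ^ 2 - (m : ℂ) ^ 2 - (m : ℂ) ^ 2 * 2 * Complex.I ≠ 0 from fun h => hnum (by linear_combination h)]
      all_goals ring

/-! ### Continuity -/

lemma sfun_cont (m E : ℝ) : Continuous (fun ξ => sfun m E ξ) := by
  unfold sfun
  exact Real.continuous_sqrt.comp (by continuity)

lemma Amat_cont (m E : ℝ) (hEm : |E| < |m|) : Continuous (fun ξ => Amat m E ξ) := by
  have hsc : Continuous fun ξ => ((sfun m E ξ : ℝ) : ℂ) :=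
    Complex.continuous_ofReal.comp (sfun_cont m E)
  have hsne : ∀ ξ : ℝ, ((sfun m E ξ : ℝ) : ℂ) ≠ 0 := fun ξ => by
    exact_mod_cast (hs_pos m E ξ hEm).ne'
  have hd1 : Continuous fun ξ => d1 m E ξ := by
    unfold d1
    exact continuous_const.add (continuous_const.div hsc hsne)
  have hd2 : Continuous fun ξ => d2 m E ξ := by
    unfold d2
    apply Continuous.div
    · continuity
    · exact hsc.mul (hsc.add continuous_const)
    · intro ξ
      refine mul_ne_zero (hsne ξ) ?_
      intro hc
      have h0 : ((sfun m E ξ + |m| : ℝ) : ℂ) = 0 := by push_cast; linear_combination hc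
      have : sfun m E ξ + |m| = 0 := by exact_mod_cast h0
      have := hs_pos m E ξ hEm
      have := abs_nonneg m
      linarith
  unfold Amat
  rcases lt_or_ge m 0 with hneg | hpos
  · simp only [if_pos hneg]
    apply continuous_matrix
    intro i j
    fin_cases i <;> fin_cases j <;> simp <;> continuity
  · simp only [if_neg (not_lt.mpr hpos)]
    apply continuous_matrix
    intro i j
    fin_cases i <;> fin_cases j <;> simp <;> continuity

/-! ### Eigenvalues -/

lemma eig_mem (m E ξ : ℝ) (μ : ℂ) (v : Fin 2 → ℂ) (h0 : v ≠ 0)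
    (hv : (Amat m E ξ).mulVec v = μ • v) : μ = d1 m E ξ ∨ μ = d2 m E ξ := by
  obtain ⟨i, hi⟩ : ∃ i, v i ≠ 0 := by
    by_contra h; push_neg at h; exact h0 (funext h)
  have hvi := congrFun hv i
  rcases lt_or_ge m 0 with hneg | hpos
  · fin_cases i <;>
      simp [Amat, if_pos hneg, Matrix.mulVec, dotProduct, Fin.sum_univ_two] at hvi hi ⊢
    · exact Or.inr (hvi.resolve_right hi).symm
    · exact Or.inl (hvi.resolve_right hi).symm
  · fin_cases i <;>
      simp [Amat, if_neg (not_lt.mpr hpos), Matrix.mulVec, dotProduct,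
        Fin.sum_univ_two] at hvi hi ⊢
    · exact Or.inl (hvi.resolve_right hi).symm
    · exact Or.inr (hvi.resolve_right hi).symm

/-! ### Bounds -/

lemma d1_bounds (m E ξ : ℝ) (hEm : |E| < |m|) :
    1 ≤ ‖d1 m E ξ‖ ∧
      ‖d1 m E ξ‖ ≤ 1 + |m| / Real.sqrt (m ^ 2 - E ^ 2) := by
  have hsp := hs_pos m E ξ hEm
  have hwp := hw m E hEm
  have hwle : Real.sqrt (m ^ 2 - E ^ 2) ≤ sfun m E ξ :=
    Real.sqrt_le_sqrt (by nlinarith [sq_nonneg ξ])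
  have hwsp : 0 < Real.sqrt (m ^ 2 - E ^ 2) := Real.sqrt_pos.mpr hwp
  have hval : d1 m E ξ = ((1 + |m| / sfun m E ξ : ℝ) : ℂ) := by
    unfold d1; push_cast; ring
  rw [hval, Complex.norm_real, Real.norm_eq_abs, abs_of_pos (by positivity)]
  constructor
  · have : 0 ≤ |m| / sfun m E ξ := by positivity
    linarith
  · have : |m| / sfun m E ξ ≤ |m| / Real.sqrt (m ^ 2 - E ^ 2) := by
      gcongr
    linarith

lemma d2_bounds (m E ξ : ℝ) (hm : m ≠ 0) (hEm : |E| < |m|) :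
    1 / 4 ≤ ‖d2 m E ξ‖ ∧
      ‖d2 m E ξ‖ ≤ 3 * m ^ 2 / (m ^ 2 - E ^ 2) := by
  have hsp := hs_pos m E ξ hEm
  have hsq := hs_sq m E ξ hEm
  have hwp := hw m E hEm
  set s := sfun m E ξ with hsdef
  have hD : (0:ℝ) < s * (s + |m|) := by positivity
  set num : ℂ := (ξ : ℂ) ^ 2 - (E : ℂ) ^ 2 - 2 * Complex.I * (m : ℂ) ^ 2 with hnumdef
  have habs : ‖d2 m E ξ‖ = ‖num‖ / (s * (s + |m|)) := by
    have h1 : d2 m E ξ = num / ((s * (s + |m|) : ℝ) : ℂ) := by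
      unfold d2
      rw [← hsdef]
      push_cast
      ring
    rw [h1, norm_div, Complex.norm_real, Real.norm_eq_abs, abs_of_pos hD]
  have hre : num.re = ξ ^ 2 - E ^ 2 := by
    simp [hnumdef, ← Complex.ofReal_pow, Complex.sub_re, Complex.mul_re,
      Complex.I_re, Complex.I_im, Complex.ofReal_re, Complex.ofReal_im]
  have him : num.im = -(2 * m ^ 2) := by
    simp [hnumdef, ← Complex.ofReal_pow, Complex.sub_im, Complex.mul_im, Complex.mul_re,
      Complex.I_re, Complex.I_im, Complex.ofReal_re, Complex.ofReal_im]
  have low1 : 2 * m ^ 2 ≤ ‖num‖ := by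
    have h := Complex.abs_im_le_norm num
    rw [him, abs_neg, abs_of_nonneg (by positivity)] at h
    exact h
  have low2 : ξ ^ 2 - E ^ 2 ≤ ‖num‖ := by
    have h := Complex.abs_re_le_norm num
    rw [hre] at h
    exact (le_abs_self _).trans h
  have up : ‖num‖ ≤ ξ ^ 2 + E ^ 2 + 2 * m ^ 2 := by
    have h := Complex.norm_le_abs_re_add_abs_im num
    rw [hre, him] at h
    have h3 : |(-(2 * m ^ 2) : ℝ)| = 2 * m ^ 2 := by
      rw [abs_neg]; exact abs_of_nonneg (by positivity)
    rw [h3] at h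
    have h2 : |ξ ^ 2 - E ^ 2| ≤ ξ ^ 2 + E ^ 2 := by
      rw [abs_le]
      constructor <;> nlinarith [sq_nonneg ξ, sq_nonneg E]
    linarith
  have hmsq : E ^ 2 < m ^ 2 := by linarith
  constructor
  · rw [habs, le_div_iff₀ hD]
    nlinarith [low1, low2, hsq, sq_nonneg (s - |m|), sq_abs m, hmsq, sq_nonneg E,
      abs_nonneg m, hsp, sq_nonneg ξ]
  · rw [habs, div_le_div_iff₀ hD hwp]
    nlinarith [hsq, hmsq, mul_nonneg hsp.le (abs_nonneg m), sq_nonneg ξ, sq_nonneg E,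
      mul_le_mul_of_nonneg_right up hwp.le, mul_nonneg (sq_nonneg ξ) (sq_nonneg E),
      mul_nonneg (mul_nonneg hsp.le (abs_nonneg m)) (sq_nonneg m),
      mul_pos (mul_pos hsp hsp) (by positivity : (0:ℝ) < m ^ 2)]

/-- **Lemma (the flat symbol `a = a₁a₂` is invertible with explicit inverse).**
The product `a₁(ξ)a₂(ξ)`, a priori defined for `ξ ≠ ±E`, extends continuously to
all of `ℝ`; its inverse is given by the explicit formula `aInv`, and its
eigenvalues are bounded and bounded away from zero, uniformly in `ξ`. -/
theorem flat_symbol_invertible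
    (m E : ℝ) (hm : m ≠ 0) (hE : 0 < |E|) (hEm : |E| < |m|) :
    ∃ A : ℝ → Matrix (Fin 2) (Fin 2) ℂ,
      Continuous A ∧
      (∀ ξ : ℝ, ξ ≠ E → ξ ≠ -E → A ξ = a1 m E ξ * a2 m E ξ) ∧
      (∀ ξ : ℝ, A ξ * aInv m E ξ = 1 ∧ aInv m E ξ * A ξ = 1) ∧
      ∃ c C : ℝ, 0 < c ∧ c ≤ C ∧
        ∀ (ξ : ℝ) (μ : ℂ) (v : Fin 2 → ℂ), v ≠ 0 →
          Matrix.mulVec (A ξ) v = μ • v →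
          c ≤ ‖μ‖ ∧ ‖μ‖ ≤ C := by
  have hwp := hw m E hEm
  have hwsp : 0 < Real.sqrt (m ^ 2 - E ^ 2) := Real.sqrt_pos.mpr hwp
  refine ⟨fun ξ => Amat m E ξ, Amat_cont m E hEm,
    fun ξ h1 h2 => prod_eq m E ξ hm hEm h1 h2,
    fun ξ => inv_eq m E ξ hm hEm,
    1 / 4, 1 + |m| / Real.sqrt (m ^ 2 - E ^ 2) + 3 * m ^ 2 / (m ^ 2 - E ^ 2),
    by norm_num, ?_, ?_⟩
  · have h1 : 0 ≤ |m| / Real.sqrt (m ^ 2 - E ^ 2) := by positivity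
    have h2 : 0 ≤ 3 * m ^ 2 / (m ^ 2 - E ^ 2) := by positivity
    linarith
  · intro ξ μ v hv0 hv
    have h1 : 0 ≤ |m| / Real.sqrt (m ^ 2 - E ^ 2) := by positivity
    have h2 : 0 ≤ 3 * m ^ 2 / (m ^ 2 - E ^ 2) := by positivity
    rcases eig_mem m E ξ μ v hv0 hv with h | h <;> subst h
    · obtain ⟨hl, hu⟩ := d1_bounds m E ξ hEm
      constructor <;> linarith
    · obtain ⟨hl, hu⟩ := d2_bounds m E ξ hm hEm
      constructor <;> linarith

end
end

section
/- Let γ : ℝ → ℝ² be a C² injective curve with |γ'(t)| = 1 for all t, satisfying |γ''(t)| ≤ C₂ e^{−η|t|} for all t (for some constants C₂, η > 0), and such that |γ(t)| → ∞, |γ(−t)| → ∞, and |γ(t) − γ(−t)| → ∞ as t → +∞. Then there exists c > 0 such that |γ(t) − γ(s)| ≥ c|t − s| for all s, t ∈ ℝ. -/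
open Filter

noncomputable section

/-- The Euclidean norm on `ℝ × ℝ`. -/
def e2 (v : ℝ × ℝ) : ℝ := Real.sqrt (v.1 ^ 2 + v.2 ^ 2)

section AuxiliaryLemmas

open Real Set Topology

set_option linter.unusedSectionVars false

variable {E : Type*} [NormedAddCommGroup E] [InnerProductSpace ℝ E] [CompleteSpace E]

/-- MVT-type wrapper: bound `‖f b - f a‖` by `B b - B a` when `‖f'‖ ≤ B'`. -/
lemma deriv_bound_aux (f f' : ℝ → E) (B B' : ℝ → ℝ) {a b : ℝ} (hab : a ≤ b)
    (hf : ∀ u, HasDerivAt f (f' u) u) (hB : ∀ u, HasDerivAt B (B' u) u)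
    (hbound : ∀ u ∈ Set.Icc a b, ‖f' u‖ ≤ B' u) :
    ‖f b - f a‖ ≤ B b - B a := by
  have key := image_norm_le_of_norm_deriv_right_le_deriv_boundary
    (f := fun u => f u - f a) (f' := f') (a := a) (b := b)
    (B := fun u => B u - B a) (B' := B')
    (((Differentiable.continuous (fun x => (hf x).differentiableAt)).sub continuous_const).continuousOn)
    (fun x _ => (((hf x).sub_const (f a))).hasDerivWithinAt)
    (by simp)
    (fun x => ((hB x).sub_const (B a)))
    (fun x hx => hbound x ⟨hx.1, le_of_lt hx.2⟩)
  simpa using key (right_mem_Icc.mpr hab)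

/-- One-sided asymptotic direction lemma. -/
lemma oneSide (F G G' : ℝ → E) (C₂ η : ℝ) (hC₂ : 0 < C₂) (hη : 0 < η)
    (hFG : ∀ t, HasDerivAt F (G t) t) (hGG : ∀ t, HasDerivAt G (G' t) t)
    (harc : ∀ t, ‖G t‖ = 1)
    (hdec : ∀ t, ‖G' t‖ ≤ C₂ * Real.exp (-η * |t|)) :
    ∃ v : E, ‖v‖ = 1 ∧
      ∀ s t : ℝ, 0 ≤ s → s ≤ t →
        ‖F t - F s - (t - s) • v‖ ≤ C₂ / η ^ 2 * Real.exp (-η * s) := by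
  have hBd : ∀ (c : ℝ), ∀ u : ℝ, HasDerivAt (fun u : ℝ => -(c / η) * Real.exp (-η * u))
      (c * Real.exp (-η * u)) u := by
    intro c u
    have h1 : HasDerivAt (fun u : ℝ => -η * u) (-η) u := by
      simpa using (hasDerivAt_id u).const_mul (-η)
    have h3 := h1.exp.const_mul (-(c / η))
    refine h3.congr_deriv ?_
    rw [show -(c / η) * (Real.exp (-η * u) * -η) = c * Real.exp (-η * u) * (η / η) by ring,
      div_self hη.ne', mul_one]
  -- Step 1 : variation bound on G
  have step1 : ∀ s t : ℝ, 0 ≤ s → s ≤ t →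
      ‖G t - G s‖ ≤ C₂ / η * Real.exp (-η * s) - C₂ / η * Real.exp (-η * t) := by
    intro s t hs hst
    have := deriv_bound_aux G G' (fun u => -(C₂ / η) * Real.exp (-η * u))
      (fun u => C₂ * Real.exp (-η * u)) hst hGG (hBd C₂) ?_
    · linarith [this]
    · intro u hu
      have hu0 : (0:ℝ) ≤ u := le_trans hs hu.1
      simpa [abs_of_nonneg hu0] using hdec u
  have hexp1 : ∀ x : ℝ, 0 < Real.exp x := fun x => Real.exp_pos x
  -- Step 2 : Cauchy sequence, limit v
  have hcauchy : CauchySeq (fun n : ℕ => G n) := by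
    apply cauchySeq_of_le_geometric (Real.exp (-η)) (C₂ / η)
      (Real.exp_lt_one_iff.mpr (by linarith))
    intro n
    rw [dist_eq_norm, norm_sub_rev]
    push_cast
    have h1 := step1 n (n + 1) (Nat.cast_nonneg n) (by linarith)
    have h2 : Real.exp (-η * n) = Real.exp (-η) ^ n := by
      rw [← Real.exp_nat_mul]; ring_nf
    calc ‖G (↑n + 1) - G ↑n‖ ≤ C₂ / η * Real.exp (-η * n) - C₂ / η * Real.exp (-η * (↑n+1)) := by
          simpa using h1
      _ ≤ C₂ / η * Real.exp (-η * n) := by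
          have := hexp1 (-η * (↑n+1)); nlinarith [div_pos hC₂ hη]
      _ = C₂ / η * Real.exp (-η) ^ n := by rw [h2]
  obtain ⟨v, hv_t⟩ := cauchySeq_tendsto_of_complete hcauchy
  -- v properties
  have hvnorm : ‖v‖ = 1 := by
    have h1 : Tendsto (fun n : ℕ => ‖G n‖) atTop (𝓝 ‖v‖) := hv_t.norm
    have h2 : Tendsto (fun _ : ℕ => (1:ℝ)) atTop (𝓝 ‖v‖) := by
      simpa [harc] using h1
    exact tendsto_nhds_unique h2 tendsto_const_nhds
  have hGv : ∀ s : ℝ, 0 ≤ s → ‖G s - v‖ ≤ C₂ / η * Real.exp (-η * s) := by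
    intro s hs
    have hlim : Tendsto (fun n : ℕ => ‖G s - G n‖) atTop (𝓝 ‖G s - v‖) :=
      (tendsto_const_nhds.sub hv_t).norm
    apply le_of_tendsto hlim
    filter_upwards [eventually_ge_atTop ⌈s⌉₊] with n hn
    have hsn : s ≤ (n : ℝ) := le_trans (Nat.le_ceil s) (by exact_mod_cast hn)
    have := step1 s n hs hsn
    rw [norm_sub_rev]
    have := hexp1 (-η * n)
    nlinarith [div_pos hC₂ hη]
  refine ⟨v, hvnorm, ?_⟩
  intro s t hs hst
  have key := deriv_bound_aux (fun u => F u - u • v) (fun u => G u - v)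
    (fun u => -(C₂ / η / η) * Real.exp (-η * u)) (fun u => C₂ / η * Real.exp (-η * u))
    hst ?_ (hBd (C₂ / η)) ?_
  · have heq : F t - t • v - (F s - s • v) = F t - F s - (t - s) • v := by
      rw [sub_smul]; abel
    rw [heq] at key
    have h1 : C₂ / η / η = C₂ / η ^ 2 := by rw [div_div, pow_two]
    have := hexp1 (-η * t)
    have h2 : 0 < C₂ / η ^ 2 := by positivity
    rw [h1] at key
    nlinarith
  · intro u
    have : HasDerivAt (fun u : ℝ => u • v) v u := by
      simpa using (hasDerivAt_id u).smul_const v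
    exact (hFG u).sub this
  · intro u hu
    exact hGv u (le_trans hs hu.1)

/-- Taylor-type quadratic bound. -/
lemma taylorBound (F G G' : ℝ → E) (C₂ : ℝ)
    (hFG : ∀ t, HasDerivAt F (G t) t) (hGG : ∀ t, HasDerivAt G (G' t) t)
    (hdecw : ∀ t, ‖G' t‖ ≤ C₂) :
    ∀ s t : ℝ, s ≤ t → ‖F t - F s - (t - s) • G s‖ ≤ C₂ / 2 * (t - s) ^ 2 := by
  intro s t hst
  have stepG : ∀ u : ℝ, s ≤ u → ‖G u - G s‖ ≤ C₂ * (u - s) := by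
    intro u hu
    have := deriv_bound_aux G G' (fun x => C₂ * x) (fun _ => C₂) hu hGG
      (fun x => by simpa using (hasDerivAt_id x).const_mul C₂) (fun x _ => hdecw x)
    calc ‖G u - G s‖ ≤ C₂ * u - C₂ * s := this
      _ = C₂ * (u - s) := by ring
  have key := deriv_bound_aux (fun u => F u - u • G s) (fun u => G u - G s)
    (fun u => C₂ / 2 * (u - s) ^ 2) (fun u => C₂ * (u - s)) hst
    (fun u => (hFG u).sub (by simpa using (hasDerivAt_id u).smul_const (G s)))
    (fun u => by
      have h := (((hasDerivAt_id u).sub_const s).pow 2).const_mul (C₂ / 2)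
      refine h.congr_deriv ?_
      simp only [id_eq]
      push_cast
      ring)
    (fun u hu => stepG u hu.1)
  have heq : F t - t • G s - (F s - s • G s) = F t - F s - (t - s) • G s := by
    rw [sub_smul]; abel
  rw [heq] at key
  calc ‖F t - F s - (t - s) • G s‖ ≤ C₂ / 2 * (t - s) ^ 2 - C₂ / 2 * (s - s) ^ 2 := key
    _ = C₂ / 2 * (t - s) ^ 2 := by ring

open RealInnerProductSpace in
/-- Geometric lemma: two unit vectors with inner product `> -1` span proportionally. -/
lemma geomIneq (u w : E) (hu : ‖u‖ = 1) (hw : ‖w‖ = 1) (a b : ℝ) (ha : 0 ≤ a) (hb : 0 ≤ b) :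
    Real.sqrt ((1 + ⟪u, w⟫) / 2) * (a + b) ≤ ‖a • u + b • w‖ := by
  set μ := ⟪u, w⟫ with hμ
  have hμ1 : μ ≤ 1 := by
    have := real_inner_le_norm u w
    rw [hu, hw] at this; simpa using this
  by_cases hpos : 0 ≤ (1 + μ) / 2
  · have hsq : ‖a • u + b • w‖ ^ 2 = a ^ 2 + b ^ 2 + 2 * a * b * μ := by
      rw [norm_add_sq_real]
      rw [real_inner_smul_left, real_inner_smul_right, norm_smul, norm_smul]
      rw [hu, hw]
      simp [Real.norm_eq_abs, abs_of_nonneg ha, abs_of_nonneg hb]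
      ring
    have hcore : (1 + μ) / 2 * (a + b) ^ 2 ≤ ‖a • u + b • w‖ ^ 2 := by
      rw [hsq]; nlinarith [sq_nonneg (a - b), mul_nonneg ha hb]
    calc Real.sqrt ((1 + μ) / 2) * (a + b)
        = Real.sqrt ((1 + μ) / 2 * (a + b) ^ 2) := by
          rw [Real.sqrt_mul hpos, Real.sqrt_sq (by linarith)]
      _ ≤ Real.sqrt (‖a • u + b • w‖ ^ 2) := Real.sqrt_le_sqrt hcore
      _ = ‖a • u + b • w‖ := Real.sqrt_sq (norm_nonneg _)
  · rw [Real.sqrt_eq_zero_of_nonpos (le_of_not_ge hpos)]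
    calc (0:ℝ) * (a + b) = 0 := by ring
      _ ≤ _ := norm_nonneg _

open RealInnerProductSpace in
set_option maxHeartbeats 2000000 in
/-- Abstract chord-arc theorem in an inner product space. -/
theorem mainAbstract (F : ℝ → E) (C₂ η : ℝ) (hC₂ : 0 < C₂) (hη : 0 < η)
    (hF : ContDiff ℝ 2 F) (hinj : Function.Injective F)
    (harc : ∀ t, ‖deriv F t‖ = 1)
    (hdec : ∀ t, ‖deriv (deriv F) t‖ ≤ C₂ * Real.exp (-η * |t|))
    (hend3 : Tendsto (fun t => ‖F t - F (-t)‖) atTop atTop) :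
    ∃ c > (0:ℝ), ∀ s t : ℝ, c * |t - s| ≤ ‖F t - F s‖ := by
  classical
  set G := deriv F with hG
  set G' := deriv G with hG'
  have hF2 : ContDiff ℝ (1 + 1) F := by
    rw [show ((1 : WithTop ℕ∞) + 1) = 2 by norm_num]
    exact hF
  have hGc : ContDiff ℝ 1 G := (contDiff_succ_iff_deriv.mp hF2).2.2
  have hFdiff : Differentiable ℝ F := hF.differentiable two_ne_zero
  have hGdiff : Differentiable ℝ G := hGc.differentiable one_ne_zero
  have hFG : ∀ t, HasDerivAt F (G t) t := fun t => (hFdiff t).hasDerivAt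
  have hGG : ∀ t, HasDerivAt G (G' t) t := fun t => (hGdiff t).hasDerivAt
  -- right-side direction v
  obtain ⟨v, hvn, hvb⟩ := oneSide F G G' C₂ η hC₂ hη hFG hGG harc hdec
  -- left-side direction w (apply oneSide to the reflected curve)
  have hFGn : ∀ t : ℝ, HasDerivAt (fun u => F (-u)) (-G (-t)) t := by
    intro t
    have h := (hFG (-t)).scomp t (hasDerivAt_neg t)
    simpa [Function.comp_def] using h
  have hGGn : ∀ t : ℝ, HasDerivAt (fun u => -G (-u)) (G' (-t)) t := by
    intro t
    have h := ((hGG (-t)).scomp t (hasDerivAt_neg t)).neg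
    simpa [Function.comp_def, Pi.neg_def] using h
  obtain ⟨w, hwn, hwb⟩ := oneSide (fun u => F (-u)) (fun u => -G (-u)) (fun u => G' (-u))
    C₂ η hC₂ hη hFGn hGGn (fun t => by rw [norm_neg]; exact harc (-t))
    (fun t => by simpa [abs_neg] using hdec (-t))
  set K := C₂ / η ^ 2 with hK
  have hKpos : 0 < K := by positivity
  -- basic one-sided lower bounds
  have sameSideR : ∀ s t : ℝ, 0 ≤ s → s ≤ t →
      (t - s) - K * Real.exp (-η * s) ≤ ‖F t - F s‖ := by
    intro s t hs hst
    have h1 := hvb s t hs hst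
    have h2 : ‖(t - s) • v‖ = t - s := by
      rw [norm_smul, hvn, Real.norm_eq_abs, abs_of_nonneg (by linarith), mul_one]
    have h4 : ‖(t - s) • v‖ - ‖F t - F s‖ ≤ ‖F t - F s - (t - s) • v‖ := by
      rw [norm_sub_rev (F t - F s) ((t - s) • v)]
      exact norm_sub_norm_le _ _
    rw [h2] at h4; linarith
  have sameSideL : ∀ s t : ℝ, s ≤ t → t ≤ 0 →
      (t - s) - K * Real.exp (-η * (-t)) ≤ ‖F t - F s‖ := by
    intro s t hst ht
    have h1 := hwb (-t) (-s) (by linarith) (by linarith)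
    simp only [neg_neg] at h1
    have heq : -s - -t = t - s := by ring
    rw [heq] at h1
    have h2 : ‖(t - s) • w‖ = t - s := by
      rw [norm_smul, hwn, Real.norm_eq_abs, abs_of_nonneg (by linarith), mul_one]
    have h4 : ‖(t - s) • w‖ - ‖F s - F t‖ ≤ ‖F s - F t - (t - s) • w‖ := by
      rw [norm_sub_rev (F s - F t) ((t - s) • w)]
      exact norm_sub_norm_le _ _
    rw [h2, norm_sub_rev (F s)] at h4; linarith
  -- cross bound
  have cross : ∀ s t : ℝ, s ≤ 0 → 0 ≤ t →
      ‖F t - F s - (t • v + s • w)‖ ≤ 2 * K := by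
    intro s t hs ht
    have e1 := hvb 0 t le_rfl ht
    have e2 := hwb 0 (-s) le_rfl (by linarith)
    simp only [neg_zero, neg_neg, sub_zero] at e1 e2
    rw [mul_zero, Real.exp_zero, mul_one] at e1 e2
    have heq : F t - F s - (t • v + s • w)
        = (F t - F 0 - t • v) - (F s - F 0 - (-s) • w) := by
      rw [neg_smul]; abel
    rw [heq]
    calc ‖(F t - F 0 - t • v) - (F s - F 0 - (-s) • w)‖
        ≤ ‖F t - F 0 - t • v‖ + ‖F s - F 0 - (-s) • w‖ := norm_sub_le _ _
      _ ≤ 2 * K := by linarith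
  -- v ≠ w from hend3
  have hVW : v ≠ w := by
    intro hvw
    obtain ⟨t₀, ht₀⟩ := ((hend3.eventually_gt_atTop (2 * K)).and
      (eventually_ge_atTop (0:ℝ))).exists
    have := cross (-t₀) t₀ (by linarith [ht₀.2]) ht₀.2
    rw [hvw] at this
    have hz : t₀ • w + (-t₀) • w = 0 := by rw [neg_smul]; abel
    rw [hz, sub_zero] at this
    exact absurd this (not_le.mpr ht₀.1)
  have hμlt : ⟪v, w⟫ < 1 := by
    have hne : v - w ≠ 0 := sub_ne_zero.mpr hVW
    have hpos : 0 < ‖v - w‖ ^ 2 := by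
      have := norm_pos_iff.mpr hne
      positivity
    have hexp : ‖v - w‖ ^ 2 = 2 - 2 * ⟪v, w⟫ := by
      rw [norm_sub_sq_real, hvn, hwn]; ring
    rw [hexp] at hpos; linarith
  have hμge : -1 ≤ ⟪v, w⟫ := by
    have h := abs_real_inner_le_norm v w
    rw [hvn, hwn] at h
    have := abs_le.mp (by simpa using h)
    linarith [this.1]
  set c₀ := Real.sqrt ((1 - ⟪v, w⟫) / 2) with hc₀
  have hc₀pos : 0 < c₀ := Real.sqrt_pos.mpr (by linarith)
  have hc₀le1 : c₀ ≤ 1 := by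
    calc c₀ ≤ Real.sqrt 1 := Real.sqrt_le_sqrt (by linarith)
      _ = 1 := Real.sqrt_one
  -- cross lower bound
  have crossLower : ∀ s t : ℝ, s ≤ 0 → 0 ≤ t →
      c₀ * (t - s) - 2 * K ≤ ‖F t - F s‖ := by
    intro s t hs ht
    have hg := geomIneq v (-w) hvn (by rw [norm_neg]; exact hwn) t (-s) ht (by linarith)
    rw [inner_neg_right] at hg
    have h1 : (1 + -⟪v, w⟫) / 2 = (1 - ⟪v, w⟫) / 2 := by ring
    rw [h1] at hg
    have h2 : (-s) • (-w) = s • w := by rw [smul_neg, neg_smul, neg_neg]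
    rw [h2] at hg
    have h3 : t + -s = t - s := by ring
    rw [h3] at hg
    have h5 : ‖t • v + s • w‖ - ‖F t - F s‖ ≤ ‖F t - F s - (t • v + s • w)‖ := by
      rw [norm_sub_rev (F t - F s) (t • v + s • w)]
      exact norm_sub_norm_le _ _
    have h6 := cross s t hs ht
    linarith
  -- near-diagonal bound
  have nearDiag : ∀ s t : ℝ, s ≤ t → C₂ * (t - s) ≤ 1 → (t - s) / 2 ≤ ‖F t - F s‖ := by
    intro s t hst hsmall
    have h1 := taylorBound F G G' C₂ hFG hGG
      (fun u => le_trans (hdec u) (by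
        have : Real.exp (-η * |u|) ≤ 1 := Real.exp_le_one_iff.mpr (by
          have := abs_nonneg u; nlinarith)
        nlinarith)) s t hst
    have h2 : ‖(t - s) • G s‖ = t - s := by
      rw [norm_smul, harc, Real.norm_eq_abs, abs_of_nonneg (by linarith), mul_one]
    have h4 : ‖(t - s) • G s‖ - ‖F t - F s‖ ≤ ‖F t - F s - (t - s) • G s‖ := by
      rw [norm_sub_rev (F t - F s) ((t - s) • G s)]
      exact norm_sub_norm_le _ _
    rw [h2] at h4
    nlinarith [sub_nonneg.mpr hst]
  -- choose T with tail smallness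
  set δ := 1 / C₂ with hδ
  have hδpos : 0 < δ := by positivity
  have hTex : ∃ T : ℝ, 0 ≤ T ∧ K * Real.exp (-η * T) ≤ δ / 2 := by
    have hlim : Tendsto (fun T : ℝ => K * Real.exp (-η * T)) atTop (𝓝 (K * 0)) := by
      apply Tendsto.const_mul
      have : Tendsto (fun T : ℝ => -η * T) atTop atBot :=
        tendsto_id.const_mul_atTop_of_neg (by linarith)
      exact Real.tendsto_exp_atBot.comp this
    rw [mul_zero] at hlim
    have hev := hlim.eventually (gt_mem_nhds (show (0:ℝ) < δ / 2 by positivity))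
    obtain ⟨T, hT⟩ := (hev.and (eventually_ge_atTop (0:ℝ))).exists
    exact ⟨T, hT.2, le_of_lt hT.1⟩
  obtain ⟨T, hT0, hTe⟩ := hTex
  set R := 8 * K / c₀ + δ with hR
  have hRpos : 0 < R := by positivity
  have hδR : δ ≤ R := by
    have h9 : 0 ≤ 8 * K / c₀ := by positivity
    rw [hR]
    linarith
  set A := T + R with hA
  have hApos : 0 < A := by positivity
  -- compact minimum
  set Kc : Set (ℝ × ℝ) := (Set.Icc (-A) A ×ˢ Set.Icc (-A) A) ∩
    {p : ℝ × ℝ | δ ≤ p.2 - p.1} with hKc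
  have hKcompact : IsCompact Kc :=
    (isCompact_Icc.prod isCompact_Icc).inter_right
      (isClosed_le continuous_const (continuous_snd.sub continuous_fst))
  have hδA : δ ≤ A := le_trans hδR (by linarith)
  have hKne : Kc.Nonempty := by
    have e1 : -A ≤ -δ := by linarith
    have e2 : -δ ≤ A := by linarith
    have e3 : -A ≤ (0:ℝ) := by linarith
    have e4 : (0:ℝ) ≤ A := by linarith
    have e5 : δ ≤ (0:ℝ) - -δ := by linarith
    exact ⟨(-δ, 0), ⟨Set.mem_prod.mpr ⟨⟨e1, e2⟩, ⟨e3, e4⟩⟩, e5⟩⟩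
  have hcont : ContinuousOn (fun p : ℝ × ℝ => ‖F p.2 - F p.1‖) Kc :=
    (((hF.continuous.comp continuous_snd).sub (hF.continuous.comp continuous_fst)).norm).continuousOn
  obtain ⟨p₀, hp₀K, hp₀min⟩ := hKcompact.exists_isMinOn hKne hcont
  set m := ‖F p₀.2 - F p₀.1‖ with hm
  have hmpos : 0 < m := by
    have hne : p₀.2 ≠ p₀.1 := by
      intro h
      have := hp₀K.2
      simp only [Set.mem_setOf_eq, h] at this
      linarith
    rw [hm, norm_pos_iff]
    exact sub_ne_zero.mpr (fun hc => hne (hinj hc))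
  -- final constant
  set c := min (min (1/2 : ℝ) (c₀ / 2)) (m / R) with hc
  have hcpos : 0 < c := by
    apply lt_min (lt_min (by norm_num) (by positivity)) (by positivity)
  refine ⟨c, hcpos, ?_⟩
  have claim : ∀ s t : ℝ, s ≤ t → c * (t - s) ≤ ‖F t - F s‖ := by
    intro s t hst
    have hd0 : 0 ≤ t - s := by linarith
    have hc12 : c ≤ 1 / 2 := le_trans (min_le_left _ _) (min_le_left _ _)
    have hcc0 : c ≤ c₀ / 2 := le_trans (min_le_left _ _) (min_le_right _ _)
    have hcmR : c ≤ m / R := min_le_right _ _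
    by_cases hnd : C₂ * (t - s) ≤ 1
    · have hnd2 := nearDiag s t hst hnd
      calc c * (t - s) ≤ 1 / 2 * (t - s) := mul_le_mul_of_nonneg_right hc12 hd0
        _ ≤ ‖F t - F s‖ := by linarith
    · push_neg at hnd
      have hdδ : δ < t - s := by
        rw [hδ, div_lt_iff₀ hC₂]
        linarith [hnd]
      by_cases hbig : R ≤ t - s
      · -- far apart: global linear bound
        have global : c₀ * (t - s) - 4 * K ≤ ‖F t - F s‖ := by
          rcases le_or_gt 0 s with hs | hs
          · have h1 := sameSideR s t hs hst
            have h2 : K * Real.exp (-η * s) ≤ K := by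
              have : Real.exp (-η * s) ≤ 1 := Real.exp_le_one_iff.mpr (by nlinarith)
              nlinarith
            nlinarith
          · rcases le_or_gt t 0 with ht | ht
            · have h1 := sameSideL s t hst ht
              have h2 : K * Real.exp (-η * -t) ≤ K := by
                have : Real.exp (-η * -t) ≤ 1 := Real.exp_le_one_iff.mpr (by nlinarith)
                nlinarith
              nlinarith
            · have := crossLower s t (le_of_lt hs) (le_of_lt ht)
              linarith
        have h8 : 8 * K ≤ c₀ * (t - s) := by
          have h1 : 8 * K / c₀ ≤ t - s := by rw [hR] at hbig; linarith
          rw [div_le_iff₀ hc₀pos] at h1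
          nlinarith
        nlinarith
      · push_neg at hbig
        by_cases hsT : T ≤ s
        · have h1 := sameSideR s t (le_trans hT0 hsT) hst
          have h2 : K * Real.exp (-η * s) ≤ δ / 2 := by
            have : Real.exp (-η * s) ≤ Real.exp (-η * T) :=
              Real.exp_le_exp.mpr (by nlinarith)
            nlinarith
          nlinarith
        · push_neg at hsT
          by_cases htT : t ≤ -T
          · have h1 := sameSideL s t hst (by linarith)
            have h2 : K * Real.exp (-η * -t) ≤ δ / 2 := by
              have : Real.exp (-η * -t) ≤ Real.exp (-η * T) :=
                Real.exp_le_exp.mpr (by nlinarith)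
              nlinarith
            nlinarith
          · push_neg at htT
            -- compact middle region
            have hp : (s, t) ∈ Kc := by
              have e1 : -A ≤ s := by linarith
              have e2 : s ≤ A := by linarith
              have e3 : -A ≤ t := by linarith
              have e4 : t ≤ A := by linarith
              have e5 : δ ≤ t - s := le_of_lt hdδ
              exact ⟨Set.mem_prod.mpr ⟨⟨e1, e2⟩, ⟨e3, e4⟩⟩, e5⟩
            have hmle : m ≤ ‖F t - F s‖ := hp₀min hp
            have : c * (t - s) ≤ m := by
              calc c * (t - s) ≤ (m / R) * (t - s) := by nlinarith
                _ ≤ (m / R) * R := by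
                    apply mul_le_mul_of_nonneg_left (le_of_lt hbig) (by positivity)
                _ = m := div_mul_cancel₀ m (ne_of_gt hRpos)
            linarith
  intro s t
  rcases le_total s t with h | h
  · rw [abs_of_nonneg (by linarith)]
    exact claim s t h
  · rw [abs_of_nonpos (by linarith), norm_sub_rev]
    have := claim t s h
    calc c * -(t - s) = c * (s - t) := by ring
      _ ≤ ‖F s - F t‖ := this

end AuxiliaryLemmas

open Topology in
lemma e2_eq (v : ℝ × ℝ) :
    e2 v = ‖((WithLp.prodContinuousLinearEquiv 2 ℝ ℝ ℝ).symm v : WithLp 2 (ℝ × ℝ))‖ := by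
  rw [WithLp.prod_norm_eq_of_L2]
  simp [e2, Real.norm_eq_abs, sq_abs]

/-- **Lemma (chord-arc estimate for asymptotically flat curves).**
If `γ` is a `C²` injective arclength parameterization with exponentially
decaying curvature, whose two ends go to infinity and separate from each
other, then `|γ(t) − γ(s)| ≥ c|t − s|` for some `c > 0`. -/
theorem chord_arc_estimate
    (γ : ℝ → ℝ × ℝ) (C₂ η : ℝ) (hC₂ : 0 < C₂) (hη : 0 < η)
    (hγ : ContDiff ℝ 2 γ) (hinj : Function.Injective γ)
    (harc : ∀ t, e2 (deriv γ t) = 1)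
    (hdec : ∀ t, e2 (iteratedDeriv 2 γ t) ≤ C₂ * Real.exp (-η * |t|))
    (hend1 : Tendsto (fun t => e2 (γ t)) atTop atTop)
    (hend2 : Tendsto (fun t => e2 (γ (-t))) atTop atTop)
    (hend3 : Tendsto (fun t => e2 (γ t - γ (-t))) atTop atTop) :
    ∃ c > (0 : ℝ), ∀ s t : ℝ, c * |t - s| ≤ e2 (γ t - γ s) := by
  have hγd : Differentiable ℝ γ := hγ.differentiable two_ne_zero
  have hγ2 : ContDiff ℝ (1 + 1) γ := by
    rw [show ((1 : WithTop ℕ∞) + 1) = 2 by norm_num]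
    exact hγ
  have hγ' : ContDiff ℝ 1 (deriv γ) := (contDiff_succ_iff_deriv.mp hγ2).2.2
  have hγ'd : Differentiable ℝ (deriv γ) := hγ'.differentiable one_ne_zero
  set L : (ℝ × ℝ) →L[ℝ] WithLp 2 (ℝ × ℝ) :=
    ((WithLp.prodContinuousLinearEquiv 2 ℝ ℝ ℝ).symm : (ℝ × ℝ) →L[ℝ] WithLp 2 (ℝ × ℝ)) with hL
  set F : ℝ → WithLp 2 (ℝ × ℝ) := fun t => L (γ t) with hF
  have hFd1 : ∀ t, HasDerivAt F (L (deriv γ t)) t :=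
    fun t => L.hasFDerivAt.comp_hasDerivAt t (hγd t).hasDerivAt
  have hder1 : deriv F = fun t => L (deriv γ t) := funext fun t => (hFd1 t).deriv
  have hFd2 : ∀ t, HasDerivAt (deriv F) (L (deriv (deriv γ) t)) t := by
    intro t
    rw [hder1]
    exact L.hasFDerivAt.comp_hasDerivAt t (hγ'd t).hasDerivAt
  have hder2 : deriv (deriv F) = fun t => L (deriv (deriv γ) t) :=
    funext fun t => (hFd2 t).deriv
  have hit : iteratedDeriv 2 γ = deriv (deriv γ) := by
    rw [show (2:ℕ) = 1 + 1 from rfl, iteratedDeriv_succ, iteratedDeriv_one]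
  have hnorm : ∀ v : ℝ × ℝ, e2 v = ‖L v‖ := fun v => e2_eq v
  have hFc : ContDiff ℝ 2 F := L.contDiff.comp hγ
  have hFinj : Function.Injective F := fun a b h =>
    hinj ((WithLp.prodContinuousLinearEquiv 2 ℝ ℝ ℝ).symm.injective h)
  have hFarc : ∀ t, ‖deriv F t‖ = 1 := by
    intro t
    rw [hder1, ← hnorm]
    exact harc t
  have hFdec : ∀ t, ‖deriv (deriv F) t‖ ≤ C₂ * Real.exp (-η * |t|) := by
    intro t
    rw [hder2, ← hnorm]
    have := hdec t
    rw [hit] at this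
    exact this
  have hFend3 : Tendsto (fun t => ‖F t - F (-t)‖) atTop atTop := by
    have heq : (fun t => ‖F t - F (-t)‖) = fun t => e2 (γ t - γ (-t)) := by
      funext t
      rw [hF]
      simp only []
      rw [← map_sub, ← hnorm]
    rw [heq]
    exact hend3
  obtain ⟨c, hc, hcb⟩ := mainAbstract F C₂ η hC₂ hη hFc hFinj hFarc hFdec hFend3
  refine ⟨c, hc, ?_⟩
  intro s t
  have := hcb s t
  rw [hnorm (γ t - γ s), map_sub]
  exact this

end
end
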